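/- In the homogeneous aggregated VR model, assume T2 < T4·(1 − 1/α), i.e., on-device rendering with 2D prefetched provides more delay reduction than allocating the corresponding memory to 3D prefetching. Then the diagonal average delay p ↦ T̄(p, p) is strictly decreasing on [0, δ]: if 0 ≤ p1 < p2 ≤ δ, then T̄(p2, p2) < T̄(p1, p1). -/

import Mathlib

/-- Homogeneous aggregated VR model, assuming `T2 < T4·(1 − 1/α)`: the
diagonal average delay `p ↦ T̄(p,p)` is strictly decreasing on `[0, δ]`. -/
theorem stmt6 (Q2D R f o α V δ Qmax T2 T3 T4 : ℝ)
    (hQ : 0 < Q2D) (hR : 0 < R) (hf : 0 < f) (ho : 0 < o) (hα : 1 < α)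
    (hV : 0 < V) (hδ : 0 ≤ δ) (hQmax : 0 ≤ Qmax)
    (hbudget : δ / α + Qmax ≤ V)
    (hT2 : T2 = Q2D * o / f)
    (hT3 : T3 = Q2D / R + Q2D * o / f)
    (hT4 : T4 = α * Q2D / R)
    (Tbar : ℝ → ℝ → ℝ)
    (hTbar : ∀ p r, Tbar p r =
      (1 / V) * (min p r * T2 + (r - min p r) * T3
        + (V - (δ - p) / α - r) * T4))
    (hzone : T2 < T4 * (1 - 1 / α)) :
    ∀ p1 p2 : ℝ, 0 ≤ p1 → p1 < p2 → p2 ≤ δ →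
      Tbar p2 p2 < Tbar p1 p1 := by
  intro p1 p2 h1 h12 h2
  rw [hTbar, hTbar, min_self, min_self]
  have hVinv : 0 < 1 / V := by positivity
  have hα0 : 0 < α := by linarith
  rw [mul_lt_mul_iff_right₀ hVinv]
  have key : (p2 - p1) * (T2 + T4 / α - T4) < 0 := by
    have h : T2 + T4 / α - T4 < 0 := by
      have := hzone
      rw [mul_sub, mul_one, mul_one_div] at this
      linarith
    nlinarith
  have hd4 : ((δ - p1) / α - (δ - p2) / α) * T4 = (p2 - p1) * (T4 / α) := by
    field_simp
    ring
  nlinarith [key, hd4]
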